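/- arXiv:2110.11295 — 2 statements merged into one kernel-verified Lean document; each statement's English description precedes it below -/
import Mathlib

section
/- Let F ∈ ℂ^{d×N} be a frame with columns f_1,…,f_N and frame operator S = FF*. Fix k ∈ {1,…,N} and let u be a unit eigenvector of the partial frame operator S_k = f_1f_1* + ⋯ + f_kf_k* with eigenvalue μ. Define a new matrix F_t whose first k columns are exp(t√(-1)·uu*)·f_i for i ≤ k and whose remaining columns are f_i for i > k. Then F_t F_t* = FF* for all real t. -/
open Matrix

private lemma mul_conjTranspose_eq_sum {d N : ℕ} (M : Matrix (Fin d) (Fin N) ℂ) :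
    M * Mᴴ = ∑ i : Fin N, Matrix.vecMulVec (fun j => M j i) (star fun j => M j i) := by
  ext j l
  simp [Matrix.mul_apply, Matrix.vecMulVec_apply, Matrix.conjTranspose_apply,
    Matrix.sum_apply, Pi.star_apply]

private lemma vecMulVec_mulVec_conj {d : ℕ} (U : Matrix (Fin d) (Fin d) ℂ) (f : Fin d → ℂ) :
    Matrix.vecMulVec (U.mulVec f) (star (U.mulVec f)) =
      U * Matrix.vecMulVec f (star f) * Uᴴ := by
  ext j l
  simp only [Matrix.vecMulVec_apply, Pi.star_apply, Matrix.mulVec, dotProduct,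
    Matrix.mul_apply, Matrix.conjTranspose_apply, star_sum, star_mul', Finset.sum_mul,
    Finset.mul_sum]
  refine Finset.sum_congr rfl fun b _ => Finset.sum_congr rfl fun a _ => ?_
  ring

/-- The eigenstep circle action preserves the frame operator: if `u` is a unit eigenvector
of the `k`-th partial frame operator `S_k = Σ_{i<k} f_i f_iᴴ` with eigenvalue `μ`, and `F_t`
is obtained from `F` by applying `exp(t√(-1)·uuᴴ)` to the first `k` columns, then
`F_t * F_tᴴ = F * Fᴴ` for all real `t`. -/
theorem circle_action_preserves_frame_operator (d N : ℕ) (F : Matrix (Fin d) (Fin N) ℂ)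
    (k : ℕ) (hk1 : 1 ≤ k) (hkN : k ≤ N) (u : Fin d → ℂ) (μ : ℝ)
    (hu : star u ⬝ᵥ u = 1)
    (heig : (∑ i ∈ Finset.univ.filter (fun i : Fin N => (i : ℕ) < k),
        Matrix.vecMulVec (fun j => F j i) (star fun j => F j i)).mulVec u = (μ : ℂ) • u)
    (t : ℝ)
    (Ft : Matrix (Fin d) (Fin N) ℂ)
    (hFt : ∀ i : Fin N, (fun j => Ft j i) =
      if (i : ℕ) < k then
        (NormedSpace.exp (((t : ℂ) * Complex.I) • Matrix.vecMulVec u (star u))).mulVec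
          (fun j => F j i)
      else fun j => F j i) :
    Ft * Ftᴴ = F * Fᴴ := by
  set P : Matrix (Fin d) (Fin d) ℂ := Matrix.vecMulVec u (star u) with hP
  set c : ℂ := (t : ℂ) * Complex.I with hc
  set U : Matrix (Fin d) (Fin d) ℂ := NormedSpace.exp (c • P) with hU
  set S : Matrix (Fin d) (Fin d) ℂ :=
    ∑ i ∈ Finset.univ.filter (fun i : Fin N => (i : ℕ) < k),
      Matrix.vecMulVec (fun j => F j i) (star fun j => F j i) with hS
  have hPH : Pᴴ = P := by
    ext j l
    simp [hP, Matrix.vecMulVec_apply, mul_comm]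
  have hSH : Sᴴ = S := by
    rw [hS, Matrix.conjTranspose_sum]
    refine Finset.sum_congr rfl fun i _ => ?_
    ext j l
    simp [Matrix.vecMulVec_apply, mul_comm]
  have hSP : S * P = (μ : ℂ) • P := by
    ext j l
    have h := congrFun heig j
    simp only [Matrix.mulVec, dotProduct, Pi.smul_apply, smul_eq_mul] at h
    simp only [Matrix.mul_apply, hP, Matrix.vecMulVec_apply, Pi.star_apply,
      Matrix.smul_apply, smul_eq_mul]
    calc ∑ m, S j m * (u m * star (u l)) = (∑ m, S j m * u m) * star (u l) := by
          rw [Finset.sum_mul]; exact Finset.sum_congr rfl fun m _ => by ring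
      _ = (μ : ℂ) * (u j * star (u l)) := by rw [h]; ring
  have hPS : P * S = (μ : ℂ) • P := by
    have := congrArg Matrix.conjTranspose hSP
    rw [Matrix.conjTranspose_mul, hPH, hSH] at this
    rw [this]
    ext j l
    simp [Matrix.conjTranspose_apply, hP, Matrix.vecMulVec_apply, mul_comm]
  have hcomm : Commute (c • P) S := by
    unfold Commute SemiconjBy
    rw [Matrix.smul_mul, Matrix.mul_smul, hPS, hSP]
  have hUS : Commute U S := hcomm.exp_left
  have hUH : Uᴴ = NormedSpace.exp (-(c • P)) := by
    have h1 : star (c • P) = -(c • P) := by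
      have hPstar : star P = P := hPH
      have hcstar : star c = -c := by
        simp [hc, Complex.ext_iff]
      rw [star_smul, hPstar, hcstar, neg_smul]
    calc Uᴴ = star U := rfl
      _ = NormedSpace.exp (star (c • P)) := NormedSpace.star_exp _
      _ = NormedSpace.exp (-(c • P)) := by rw [h1]
  have hUUH : U * Uᴴ = 1 := by
    rw [hUH, hU, ← Matrix.exp_add_of_commute (c • P) (-(c • P)) (Commute.neg_right (Commute.refl (c • P))),
      add_neg_cancel, NormedSpace.exp_zero]
  have key : U * S * Uᴴ = S := by
    rw [hUS.eq, Matrix.mul_assoc, hUUH, Matrix.mul_one]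
  rw [mul_conjTranspose_eq_sum, mul_conjTranspose_eq_sum,
    ← Finset.sum_filter_add_sum_filter_not Finset.univ (fun i : Fin N => (i : ℕ) < k),
    ← Finset.sum_filter_add_sum_filter_not Finset.univ (fun i : Fin N => (i : ℕ) < k)
      (fun i => Matrix.vecMulVec (fun j => F j i) (star fun j => F j i))]
  congr 1
  · calc (∑ i ∈ Finset.univ.filter (fun i : Fin N => (i : ℕ) < k),
        Matrix.vecMulVec (fun j => Ft j i) (star fun j => Ft j i))
        = ∑ i ∈ Finset.univ.filter (fun i : Fin N => (i : ℕ) < k),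
          U * Matrix.vecMulVec (fun j => F j i) (star fun j => F j i) * Uᴴ := by
          refine Finset.sum_congr rfl fun i hi => ?_
          rw [Finset.mem_filter] at hi
          have h := hFt i
          rw [if_pos hi.2] at h
          rw [h, vecMulVec_mulVec_conj]
      _ = U * S * Uᴴ := by
          rw [hS, Finset.mul_sum, Finset.sum_mul]
      _ = S := key
  · refine Finset.sum_congr rfl fun i hi => ?_
    rw [Finset.mem_filter] at hi
    have h := hFt i
    rw [if_neg hi.2] at h
    rw [h]
end

section
/- Suppose F ∈ ℂ^{d×N} has column norms ‖f_i‖² = r_i, frame operator eigenvalues λ₁ ≥ ⋯ ≥ λ_d > 0, and there exists k ∈ {1,…,d−1} with r₁+⋯+r_k = λ₁+⋯+λ_k, where r₁ ≥ ⋯ ≥ r_N > 0 and r₁+⋯+r_N = λ₁+⋯+λ_d. Then the last d columns f_{N−d+1},…,f_N of F are linearly dependent; hence F is not full spark. -/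
open Matrix
open scoped InnerProductSpace
open Finset

private lemma conj_mul_self' (z : ℂ) : (starRingEnd ℂ) z * z = ((‖z‖ ^ 2 : ℝ) : ℂ) := by
  rw [mul_comm, Complex.mul_conj, Complex.normSq_eq_norm_sq]

private lemma my_parseval {ι E : Type*} [Fintype ι] [NormedAddCommGroup E]
    [InnerProductSpace ℂ E] (b : OrthonormalBasis ι ℂ E) (x : E) :
    ∑ i, ‖⟪b i, x⟫_ℂ‖ ^ 2 = ‖x‖ ^ 2 := by
  have h := b.sum_inner_mul_inner x x
  have h2 : ∀ i : ι, ⟪x, b i⟫_ℂ * ⟪b i, x⟫_ℂ = ((‖⟪b i, x⟫_ℂ‖ ^ 2 : ℝ) : ℂ) := by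
    intro i
    rw [← inner_conj_symm x (b i), conj_mul_self']
  rw [Finset.sum_congr rfl (fun i _ => h2 i)] at h
  rw [← Complex.ofReal_sum, @inner_self_eq_norm_sq_to_K ℂ] at h
  exact Complex.ofReal_injective (by push_cast at h ⊢; exact h)

private lemma my_step1 (d N : ℕ) (F : Matrix (Fin d) (Fin N) ℂ)
    (f : Fin N → EuclideanSpace ℂ (Fin d)) (hf : ∀ j a, f j a = F a j)
    (x y : EuclideanSpace ℂ (Fin d)) :
    ⟪x, (WithLp.toLp 2 ((F * Fᴴ) *ᵥ y) : EuclideanSpace ℂ (Fin d))⟫_ℂ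
      = ∑ j : Fin N, ⟪x, f j⟫_ℂ * ⟪f j, y⟫_ℂ := by
  simp only [PiLp.inner_apply, RCLike.inner_apply, Matrix.mulVec, Matrix.mul_apply,
    Matrix.conjTranspose_apply, dotProduct, PiLp.toLp_apply, Finset.mul_sum, Finset.sum_mul, hf]
  rw [Finset.sum_congr rfl (fun a _ => Finset.sum_comm)]
  rw [Finset.sum_comm]
  conv_rhs => rw [Finset.sum_congr rfl (fun j _ => Finset.sum_comm)]
  refine sum_congr rfl fun j _ => sum_congr rfl fun a _ => sum_congr rfl fun b _ => by
    rw [Complex.star_def]; ring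

private lemma my_step2 (d N : ℕ) (F : Matrix (Fin d) (Fin N) ℂ)
    (x : EuclideanSpace ℂ (Fin d)) :
    ⟪x, (WithLp.toLp 2 ((F * Fᴴ) *ᵥ x) : EuclideanSpace ℂ (Fin d))⟫_ℂ
      = ∑ a : Fin d, (((Matrix.isHermitian_mul_conjTranspose_self F).eigenvalues a : ℝ) : ℂ) *
        (⟪x, (Matrix.isHermitian_mul_conjTranspose_self F).eigenvectorBasis a⟫_ℂ *
         ⟪(Matrix.isHermitian_mul_conjTranspose_self F).eigenvectorBasis a, x⟫_ℂ) := by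
  set hS := Matrix.isHermitian_mul_conjTranspose_self F
  set u := hS.eigenvectorBasis with hu
  have hx : x = ∑ a : Fin d, ⟪u a, x⟫_ℂ • u a := (u.sum_repr' x).symm
  have hmv : (WithLp.toLp 2 ((F * Fᴴ) *ᵥ x) : EuclideanSpace ℂ (Fin d))
      = ∑ a : Fin d, ⟪u a, x⟫_ℂ • ((hS.eigenvalues a : ℂ) • u a) := by
    conv_lhs => rw [hx]
    rw [show WithLp.toLp 2 ((F * Fᴴ) *ᵥ (∑ a : Fin d, ⟪u a, x⟫_ℂ • u a : EuclideanSpace ℂ (Fin d)).ofLp)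
        = WithLp.toLp 2 ((F * Fᴴ).mulVecLin (∑ a : Fin d, ⟪u a, x⟫_ℂ • u a : EuclideanSpace ℂ (Fin d)).ofLp) from rfl]
    rw [WithLp.ofLp_sum, map_sum, WithLp.toLp_sum]
    refine Finset.sum_congr rfl fun a _ => ?_
    rw [WithLp.ofLp_smul, _root_.map_smul, WithLp.toLp_smul]
    congr 1
    have := hS.mulVec_eigenvectorBasis a
    rw [show (F * Fᴴ).mulVecLin (u a) = (F * Fᴴ) *ᵥ (u a) from rfl]
    rw [show ((hS.eigenvalues a : ℂ) • u a) = hS.eigenvalues a • u a from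
      (RCLike.real_smul_eq_coe_smul (K := ℂ) _ _).symm]
    rw [this, WithLp.toLp_smul]
  rw [hmv, inner_sum]
  refine Finset.sum_congr rfl fun a _ => ?_
  rw [inner_smul_right, inner_smul_right]
  ring

private lemma my_filter_lt_eq_map {n m : ℕ} (hm : m ≤ n) :
    Finset.univ.filter (fun a : Fin n => (a : ℕ) < m)
      = Finset.map (Fin.castLEEmb hm) Finset.univ := by
  ext a
  simp only [mem_filter, mem_univ, true_and, Finset.mem_map]
  constructor
  · intro h
    exact ⟨⟨a, h⟩, by simp [Fin.castLEEmb, Fin.ext_iff]⟩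
  · rintro ⟨b, -, rfl⟩
    simp only [Fin.castLEEmb, Fin.coe_castLE] at *
    exact b.isLt

private lemma my_sum_filter_lt {n m : ℕ} (hm : m ≤ n) (h : Fin n → ℝ) :
    ∑ a ∈ Finset.univ.filter (fun a : Fin n => (a : ℕ) < m), h a
      = ∑ i : Fin m, h (Fin.castLE hm i) := by
  rw [my_filter_lt_eq_map hm, Finset.sum_map]
  rfl

private lemma my_card_filter_lt {n m : ℕ} (hm : m ≤ n) :
    (Finset.univ.filter (fun a : Fin n => (a : ℕ) < m)).card = m := by
  rw [my_filter_lt_eq_map hm, Finset.card_map, Finset.card_univ, Fintype.card_fin]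

private lemma my_kyfan (d m : ℕ) (hm : m < d) (lam s : Fin d → ℝ) (hmono : Antitone lam)
    (h0 : ∀ a, 0 ≤ s a) (h1 : ∀ a, s a ≤ 1) (hsum : ∑ a, s a = m) :
    ∑ a, lam a * s a ≤ ∑ a ∈ Finset.univ.filter (fun a : Fin d => (a : ℕ) < m), lam a := by
  set c := lam ⟨m, hm⟩ with hc
  have key : ∀ a : Fin d, lam a * s a - (if (a : ℕ) < m then lam a else 0)
      ≤ c * (s a - if (a : ℕ) < m then 1 else 0) := by
    intro a
    by_cases h : (a : ℕ) < m
    · simp only [h, if_pos]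
      have h1a : lam ⟨m, hm⟩ ≤ lam a := hmono (by simp [Fin.le_def]; omega)
      nlinarith [h1 a]
    · simp only [h, if_neg, not_false_iff]
      have h2a : lam a ≤ lam ⟨m, hm⟩ := hmono (by simp [Fin.le_def]; omega)
      nlinarith [h0 a]
  have hcard : ∑ a : Fin d, (if (a : ℕ) < m then (1 : ℝ) else 0) = m := by
    rw [Finset.sum_boole]
    rw [my_card_filter_lt (le_of_lt hm)]
  have hfil : ∑ a : Fin d, (if (a : ℕ) < m then lam a else 0)
      = ∑ a ∈ Finset.univ.filter (fun a : Fin d => (a : ℕ) < m), lam a :=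
    (Finset.sum_filter _ _).symm
  have hle := Finset.sum_le_sum (fun a (_ : a ∈ Finset.univ) => key a)
  rw [Finset.sum_sub_distrib] at hle
  have hrhs : ∑ a : Fin d, c * (s a - if (a : ℕ) < m then 1 else 0) = 0 := by
    rw [← Finset.mul_sum, Finset.sum_sub_distrib, hsum, hcard]
    ring
  rw [hrhs, hfil] at hle
  linarith

set_option maxHeartbeats 1000000 in
/-- If the column norms `r` of `F` are `λ`-admissible but not strongly `λ`-admissible
(i.e. some partial-sum inequality is an equality, with `k < d`), then the last `d`
columns of `F` are linearly dependent; in particular `F` is not full spark. -/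
theorem not_strongly_admissible_not_full_spark (d N : ℕ) (hdN : d < N)
    (F : Matrix (Fin d) (Fin N) ℂ) (r : Fin N → ℝ) (lam : Fin d → ℝ)
    (hr : ∀ i, r i = ∑ j : Fin d, ‖F j i‖ ^ 2)
    (hrmono : Antitone r) (hrpos : ∀ i, 0 < r i)
    (hlmono : Antitone lam) (hlpos : ∀ i, 0 < lam i)
    (hspec : ∃ σ : Equiv.Perm (Fin d), ∀ i,
      lam i = (Matrix.isHermitian_mul_conjTranspose_self F).eigenvalues (σ i))
    (hsum : ∑ i : Fin N, r i = ∑ i : Fin d, lam i)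
    (k : ℕ) (hk1 : 1 ≤ k) (hkd : k ≤ d - 1)
    (heq : ∑ i ∈ Finset.univ.filter (fun i : Fin N => (i : ℕ) < k), r i
         = ∑ i ∈ Finset.univ.filter (fun i : Fin d => (i : ℕ) < k), lam i) :
    ¬ LinearIndependent ℂ
        (fun i : Fin d => (fun j => F j ⟨N - d + (i : ℕ), by have := i.isLt; omega⟩ :
          Fin d → ℂ)) := by
  intro hLI
  have hd2 : 2 ≤ d := by omega
  have hkd' : k < d := by omega
  have hkN : k < N := by omega
  obtain ⟨σ, hσ⟩ := hspec
  set hS := Matrix.isHermitian_mul_conjTranspose_self F with hSdef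
  set u := hS.eigenvectorBasis with hudef
  set μ := hS.eigenvalues with hμdef
  -- columns as elements of Euclidean space
  set f : Fin N → EuclideanSpace ℂ (Fin d) := fun j => WithLp.toLp 2 (fun a => F a j) with hfdef
  have hf : ∀ j a, f j a = F a j := fun j a => rfl
  have hnorm : ∀ x : EuclideanSpace ℂ (Fin d), ‖x‖ ^ 2 = ∑ a, ‖x a‖ ^ 2 := by
    intro x
    rw [EuclideanSpace.norm_eq, Real.sq_sqrt (by positivity)]
  have hr' : ∀ j, r j = ‖f j‖ ^ 2 := by
    intro j
    rw [hr j, hnorm (f j)]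
  -- the span of the first k columns
  set g : Fin k → EuclideanSpace ℂ (Fin d) := fun i => f (Fin.castLE hkN.le i) with hgdef
  set W : Submodule ℂ (EuclideanSpace ℂ (Fin d)) := Submodule.span ℂ (Set.range g) with hWdef
  have hfW : ∀ j : Fin N, (j : ℕ) < k → f j ∈ W := by
    intro j hj
    have h1 : Fin.castLE hkN.le ⟨(j : ℕ), hj⟩ = j := by
      apply Fin.ext
      rfl
    have h2 : g ⟨(j : ℕ), hj⟩ ∈ W := Submodule.subset_span ⟨⟨(j : ℕ), hj⟩, rfl⟩
    rw [hgdef] at h2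
    simp only at h2
    rwa [h1] at h2
  set m := Module.finrank ℂ W with hmdef
  have hmk : m ≤ k := by
    have h1 := finrank_range_le_card (R := ℂ) g
    simpa [Set.finrank, Fintype.card_fin] using h1
  have hmd : m < d := lt_of_le_of_lt hmk hkd'
  set b := stdOrthonormalBasis ℂ W with hbdef
  have hbE : Orthonormal ℂ (fun i => ((b i : W) : EuclideanSpace ℂ (Fin d))) :=
    b.orthonormal.comp_linearIsometry W.subtypeₗᵢ
  -- the key spectral identity
  have key : ∀ x : EuclideanSpace ℂ (Fin d),
      ∑ j : Fin N, ⟪x, f j⟫_ℂ * ⟪f j, x⟫_ℂ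
        = ∑ a : Fin d, ((μ a : ℝ) : ℂ) * (⟪x, u a⟫_ℂ * ⟪u a, x⟫_ℂ) :=
    fun x => (my_step1 d N F f hf x x).symm.trans (my_step2 d N F x)
  have keyR : ∀ x : EuclideanSpace ℂ (Fin d),
      ∑ j : Fin N, ‖⟪f j, x⟫_ℂ‖ ^ 2 = ∑ a : Fin d, μ a * ‖⟪u a, x⟫_ℂ‖ ^ 2 := by
    intro x
    have h := key x
    have hL : ∀ j, ⟪x, f j⟫_ℂ * ⟪f j, x⟫_ℂ = ((‖⟪f j, x⟫_ℂ‖ ^ 2 : ℝ) : ℂ) := fun j => by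
      rw [← inner_conj_symm x (f j), conj_mul_self']
    have hRR : ∀ a, ((μ a : ℝ) : ℂ) * (⟪x, u a⟫_ℂ * ⟪u a, x⟫_ℂ)
        = ((μ a * ‖⟪u a, x⟫_ℂ‖ ^ 2 : ℝ) : ℂ) := fun a => by
      rw [← inner_conj_symm x (u a), conj_mul_self']
      push_cast
      ring
    rw [Finset.sum_congr rfl (fun j _ => hL j), Finset.sum_congr rfl (fun a _ => hRR a),
      ← Complex.ofReal_sum, ← Complex.ofReal_sum] at h
    exact Complex.ofReal_injective h
  -- the quantity T = tr(S P_W) as a double sum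
  set T : ℝ := ∑ j : Fin N, ∑ i, ‖⟪((b i : W) : EuclideanSpace ℂ (Fin d)), f j⟫_ℂ‖ ^ 2 with hT
  set R : ℝ := ∑ j ∈ Finset.univ.filter (fun j : Fin N => ¬ (j : ℕ) < k),
      ∑ i, ‖⟪((b i : W) : EuclideanSpace ℂ (Fin d)), f j⟫_ℂ‖ ^ 2 with hRdef
  have hA : ∀ j : Fin N, (j : ℕ) < k →
      ∑ i, ‖⟪((b i : W) : EuclideanSpace ℂ (Fin d)), f j⟫_ℂ‖ ^ 2 = r j := by
    intro j hj
    have hw : f j ∈ W := hfW j hj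
    have hp := my_parseval b ⟨f j, hw⟩
    simp only [Submodule.coe_inner] at hp
    rw [hr' j]
    exact hp
  have hTsplit : T = (∑ j ∈ Finset.univ.filter (fun j : Fin N => (j : ℕ) < k), r j) + R := by
    rw [hT, ← Finset.sum_filter_add_sum_filter_not Finset.univ (fun j : Fin N => (j : ℕ) < k)]
    congr 1
    exact Finset.sum_congr rfl (fun j hj => hA j (by simpa using hj))
  have hR0 : 0 ≤ R := by
    rw [hRdef]
    refine Finset.sum_nonneg fun j _ => Finset.sum_nonneg fun i _ => by positivity
  -- the Ky Fan data
  set sfun : Fin d → ℝ := fun a => ∑ i, ‖⟪((b i : W) : EuclideanSpace ℂ (Fin d)), u a⟫_ℂ‖ ^ 2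
    with hsfun
  have hs0 : ∀ a, 0 ≤ sfun a := fun a => Finset.sum_nonneg fun i _ => by positivity
  have hs1 : ∀ a, sfun a ≤ 1 := by
    intro a
    have h1 := hbE.sum_inner_products_le (u a) (s := Finset.univ)
    have h2 : ‖u a‖ = 1 := u.orthonormal.1 a
    rw [h2, one_pow] at h1
    exact h1
  have hssum : ∑ a, sfun a = (m : ℝ) := by
    rw [Finset.sum_comm]
    have h1 : ∀ i, ∑ a, ‖⟪((b i : W) : EuclideanSpace ℂ (Fin d)), u a⟫_ℂ‖ ^ 2 = 1 := by
      intro i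
      have hp := my_parseval u ((b i : W) : EuclideanSpace ℂ (Fin d))
      have h2 : ‖((b i : W) : EuclideanSpace ℂ (Fin d))‖ = 1 := hbE.1 i
      rw [h2, one_pow] at hp
      rw [← hp]
      exact Finset.sum_congr rfl fun a _ => by rw [norm_inner_symm]
    rw [Finset.sum_congr rfl (fun i _ => h1 i), Finset.sum_const, Finset.card_univ,
      Fintype.card_fin, nsmul_eq_mul, mul_one]
  have hTB : T = ∑ a, μ a * sfun a := by
    calc T = ∑ i, ∑ j : Fin N, ‖⟪((b i : W) : EuclideanSpace ℂ (Fin d)), f j⟫_ℂ‖ ^ 2 :=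
        Finset.sum_comm
      _ = ∑ i, ∑ a, μ a * ‖⟪u a, ((b i : W) : EuclideanSpace ℂ (Fin d))⟫_ℂ‖ ^ 2 := by
        refine Finset.sum_congr rfl fun i _ => ?_
        rw [← keyR ((b i : W) : EuclideanSpace ℂ (Fin d))]
        exact Finset.sum_congr rfl fun j _ => by rw [norm_inner_symm]
      _ = ∑ a, ∑ i, μ a * ‖⟪u a, ((b i : W) : EuclideanSpace ℂ (Fin d))⟫_ℂ‖ ^ 2 :=
        Finset.sum_comm
      _ = ∑ a, μ a * sfun a := by
        refine Finset.sum_congr rfl fun a _ => ?_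
        rw [hsfun, Finset.mul_sum]
        exact Finset.sum_congr rfl fun i _ => by rw [norm_inner_symm]
  have hperm : ∑ a, μ a * sfun a = ∑ a, lam a * sfun (σ a) := by
    rw [← Equiv.sum_comp σ (fun a => μ a * sfun a)]
    exact Finset.sum_congr rfl fun a _ => by rw [hσ a]
  have hs'sum : ∑ a, sfun (σ a) = (m : ℝ) := by
    rw [Equiv.sum_comp σ sfun]
    exact hssum
  have hky : ∑ a, lam a * sfun (σ a)
      ≤ ∑ a ∈ Finset.univ.filter (fun a : Fin d => (a : ℕ) < m), lam a :=
    my_kyfan d m hmd lam (fun a => sfun (σ a)) hlmono (fun a => hs0 _) (fun a => hs1 _) hs'sum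
  -- the chain of (in)equalities
  have hsub : Finset.univ.filter (fun a : Fin d => (a : ℕ) < m)
      ⊆ Finset.univ.filter (fun a : Fin d => (a : ℕ) < k) := by
    intro a ha
    simp only [Finset.mem_filter, Finset.mem_univ, true_and] at ha ⊢
    omega
  have hmono2 : ∑ a ∈ Finset.univ.filter (fun a : Fin d => (a : ℕ) < m), lam a
      ≤ ∑ a ∈ Finset.univ.filter (fun a : Fin d => (a : ℕ) < k), lam a :=
    Finset.sum_le_sum_of_subset_of_nonneg hsub (fun a _ _ => (hlpos a).le)
  have hchain : (∑ a ∈ Finset.univ.filter (fun a : Fin d => (a : ℕ) < k), lam a) + R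
      ≤ ∑ a ∈ Finset.univ.filter (fun a : Fin d => (a : ℕ) < m), lam a := by
    have h1 : T = (∑ a ∈ Finset.univ.filter (fun a : Fin d => (a : ℕ) < k), lam a) + R := by
      rw [hTsplit, heq]
    rw [← h1]
    rw [hTB] at *
    linarith [hperm, hky]
  have hmkeq : m = k := by
    by_contra hne
    have hmltk : m < k := lt_of_le_of_ne hmk hne
    have hlt : ∑ a ∈ Finset.univ.filter (fun a : Fin d => (a : ℕ) < m), lam a
        < ∑ a ∈ Finset.univ.filter (fun a : Fin d => (a : ℕ) < k), lam a := by
      refine Finset.sum_lt_sum_of_subset hsub (i := ⟨m, hmd⟩) ?_ ?_ (hlpos _)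
        (fun j _ _ => (hlpos j).le)
      · simp only [Finset.mem_filter, Finset.mem_univ, true_and]
        exact hmltk
      · simp
    linarith
  have hReq : R = 0 := by linarith
  -- orthogonality of the tail columns to W
  have horth : ∀ j : Fin N, ¬ (j : ℕ) < k →
      ∀ i, ⟪((b i : W) : EuclideanSpace ℂ (Fin d)), f j⟫_ℂ = 0 := by
    intro j hj i
    have h1 : ∀ jj ∈ Finset.univ.filter (fun j : Fin N => ¬ (j : ℕ) < k),
        (0 : ℝ) ≤ ∑ i, ‖⟪((b i : W) : EuclideanSpace ℂ (Fin d)), f jj⟫_ℂ‖ ^ 2 :=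
      fun jj _ => Finset.sum_nonneg fun i _ => by positivity
    have hRz : ∑ j ∈ Finset.univ.filter (fun j : Fin N => ¬ (j : ℕ) < k),
        ∑ i, ‖⟪((b i : W) : EuclideanSpace ℂ (Fin d)), f j⟫_ℂ‖ ^ 2 = 0 := by
      rw [← hRdef]
      exact hReq
    have h2 := (Finset.sum_eq_zero_iff_of_nonneg h1).mp hRz
    have h3 := h2 j (by simp only [Finset.mem_filter, Finset.mem_univ, true_and]; exact hj)
    have h4 : ∀ ii ∈ (Finset.univ : Finset (Fin m)),
        (0:ℝ) ≤ ‖⟪((b ii : W) : EuclideanSpace ℂ (Fin d)), f j⟫_ℂ‖ ^ 2 :=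
      fun ii _ => by positivity
    have h5 := (Finset.sum_eq_zero_iff_of_nonneg h4).mp h3 i (Finset.mem_univ i)
    have h6 : ‖⟪((b i : W) : EuclideanSpace ℂ (Fin d)), f j⟫_ℂ‖ = 0 := by
      nlinarith [norm_nonneg (⟪((b i : W) : EuclideanSpace ℂ (Fin d)), f j⟫_ℂ)]
    exact norm_eq_zero.mp h6
  -- the tail columns lie in Wᗮ
  have hperp : ∀ j : Fin N, k ≤ (j : ℕ) → f j ∈ Wᗮ := by
    intro j hj
    rw [Submodule.mem_orthogonal]
    intro v hv
    have hvr := b.sum_repr ⟨v, hv⟩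
    have hv2 : v = ∑ i, b.repr ⟨v, hv⟩ i • ((b i : W) : EuclideanSpace ℂ (Fin d)) := by
      calc v = ((⟨v, hv⟩ : W) : EuclideanSpace ℂ (Fin d)) := rfl
        _ = ((∑ i, b.repr ⟨v, hv⟩ i • b i : W) : EuclideanSpace ℂ (Fin d)) := by rw [hvr]
        _ = ∑ i, b.repr ⟨v, hv⟩ i • ((b i : W) : EuclideanSpace ℂ (Fin d)) := by
          push_cast
          rfl
    rw [hv2, sum_inner]
    refine Finset.sum_eq_zero fun i _ => ?_
    rw [inner_smul_left, horth j (by omega) i, mul_zero]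
  -- dimension count
  have hWperp : Module.finrank ℂ Wᗮ = d - k := by
    have h1 := Submodule.finrank_add_finrank_orthogonal (K := W)
    rw [finrank_euclideanSpace_fin] at h1
    omega
  set t : ℕ := max k (N - d) with htdef
  have htN : t ≤ N := by omega
  have hcgt : d - k < N - t := by omega
  have hmem : ∀ i : Fin (N - t), f ⟨t + (i : ℕ), by omega⟩ ∈ Wᗮ := fun i =>
    hperp _ (by simp only []; omega)
  set wv : Fin (N - t) → Wᗮ := fun i => ⟨f ⟨t + (i : ℕ), by omega⟩, hmem i⟩ with hwvdef
  set ι : Fin (N - t) → Fin d := fun i => ⟨t + (i : ℕ) - (N - d), by omega⟩ with hιdef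
  have hι : Function.Injective ι := by
    intro a1 a2 hab
    rw [hιdef] at hab
    simp only [Fin.mk.injEq] at hab
    have := a1.isLt
    have := a2.isLt
    apply Fin.ext
    omega
  have hsub2 := hLI.comp ι hι
  have hwv : LinearIndependent ℂ wv := by
    apply LinearIndependent.of_comp ((WithLp.linearEquiv 2 ℂ (Fin d → ℂ)).toLinearMap ∘ₗ Wᗮ.subtype)
    have hcomp : (((WithLp.linearEquiv 2 ℂ (Fin d → ℂ)).toLinearMap ∘ₗ Wᗮ.subtype) ∘ wv) = (fun i : Fin d =>
        (fun j => F j ⟨N - d + (i : ℕ), by have := i.isLt; omega⟩ : Fin d → ℂ)) ∘ ι := by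
      funext i
      show (f ⟨t + (i : ℕ), _⟩).ofLp = _
      have : (⟨N - d + ((ι i : Fin d) : ℕ), by have := (ι i).isLt; omega⟩ : Fin N)
          = ⟨t + (i : ℕ), by have := i.isLt; omega⟩ := by
        apply Fin.ext
        simp only [hιdef]
        have := i.isLt
        omega
      funext a
      show F a _ = F a _
      rw [this]
    rw [hcomp]
    exact hsub2
  have hcard := hwv.fintype_card_le_finrank
  rw [hWperp, Fintype.card_fin] at hcard
  omega
end
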